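/- arXiv:1910.10956 — 4 statements merged into one kernel-verified Lean document; each statement's English description precedes it below -/
import Mathlib

section
/- Let a, b, c be complex constants satisfying |a| = 1, conj(a)·b + conj(b) = 0, and |c|²·e^{|b|²} = 1. Then the map C_{a,b,c} defined on the Fock space F² by (C_{a,b,c} f)(z) = c·e^{bz}·conj(f(conj(az + b))) is an antilinear isometric involution (a conjugation) on F². -/
open MeasureTheory Complex Filter

noncomputable def fockWeight (z : ℂ) : ℝ := Real.exp (-(‖z‖)^2)

/-- Membership in the Fock space `F²`: entire and square-integrable against the Gaussian. -/
def MemFock (f : ℂ → ℂ) : Prop :=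
  Differentiable ℂ f ∧
    Integrable (fun z : ℂ => (‖f z‖)^2 * fockWeight z)

/-- The Fock space inner product `⟨f,g⟩ = (1/π) ∫ f(z) conj(g(z)) e^{-|z|²} dV(z)`. -/
noncomputable def fockInner (f g : ℂ → ℂ) : ℂ :=
  (Real.pi : ℂ)⁻¹ * ∫ z : ℂ, f z * star (g z) * (fockWeight z : ℂ)

/-- The squared Fock space norm. -/
noncomputable def fockNormSq (f : ℂ → ℂ) : ℝ :=
  Real.pi⁻¹ * ∫ z : ℂ, (‖f z‖)^2 * fockWeight z

/-- Graph of the maximal multi-valued weighted composition operator induced by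
`ψ(z) f(φ(z)) = Φ(z) g^{(m)}(z)`. -/
def SG (m : ℕ) (ψ φ Φ : ℂ → ℂ) (f g : ℂ → ℂ) : Prop :=
  MemFock f ∧ MemFock g ∧ ∀ z : ℂ, ψ z * f (φ z) = Φ z * iteratedDeriv m g z

/-- Membership `(u,v) ∈ G(S*)` for the adjoint of the maximal operator. -/
def AdjP (m : ℕ) (ψ φ Φ : ℂ → ℂ) (u v : ℂ → ℂ) : Prop :=
  MemFock u ∧ MemFock v ∧
    ∀ f g : ℂ → ℂ, SG m ψ φ Φ f g → fockInner g u = fockInner f v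

/-- The weighted composition conjugation `C_{a,b,c} f(z) = c e^{bz} conj(f(conj(az+b)))`. -/
noncomputable def Cabc (a b c : ℂ) (f : ℂ → ℂ) : ℂ → ℂ :=
  fun z => c * Complex.exp (b * z) * star (f (star (a * z + b)))

section Aux

open Asymptotics Topology

/-- If `f` is entire then `z ↦ conj (f (conj z))` is entire. -/
lemma diff_conj_conj' {f : ℂ → ℂ} (hf : Differentiable ℂ f) :
    Differentiable ℂ (fun z => (starRingEnd ℂ) (f ((starRingEnd ℂ) z))) := by
  intro z
  set d := deriv f ((starRingEnd ℂ) z) with hd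
  have h1 : HasDerivAt f d ((starRingEnd ℂ) z) := (hf _).hasDerivAt
  have h2 := hasDerivAt_iff_isLittleO.mp h1
  have hct : Tendsto (starRingEnd ℂ) (𝓝 z) (𝓝 ((starRingEnd ℂ) z)) :=
    Complex.continuous_conj.tendsto z
  have h3 := (h2.comp_tendsto hct).norm_norm
  have h4 : (fun w => ‖(starRingEnd ℂ) (f ((starRingEnd ℂ) w)) -
      (starRingEnd ℂ) (f ((starRingEnd ℂ) z)) - (w - z) • (starRingEnd ℂ) d‖)
      =o[𝓝 z] fun w => ‖w - z‖ := by
    refine h3.congr (fun w => ?_) (fun w => ?_)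
    · show ‖f ((starRingEnd ℂ) w) - f ((starRingEnd ℂ) z) -
        ((starRingEnd ℂ) w - (starRingEnd ℂ) z) • d‖ = _
      rw [← RCLike.norm_conj (f ((starRingEnd ℂ) w) - f ((starRingEnd ℂ) z) -
        ((starRingEnd ℂ) w - (starRingEnd ℂ) z) • d)]
      congr 1
      simp only [map_sub, map_mul, smul_eq_mul, Complex.conj_conj]
    · show ‖(starRingEnd ℂ) w - (starRingEnd ℂ) z‖ = ‖w - z‖
      rw [← map_sub, RCLike.norm_conj]
  exact (hasDerivAt_iff_isLittleO.mpr (isLittleO_norm_norm.mp h4)).differentiableAt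

end Aux

/-- Under `|a| = 1`, `conj(a)b + conj(b) = 0`, `|c|² e^{|b|²} = 1`, the map `C_{a,b,c}`
is an antilinear isometric involution (a conjugation) on the Fock space. -/
theorem stmt4 (a b c : ℂ) (ha : ‖a‖ = 1)
    (hb : star a * b + star b = 0)
    (hc : (‖c‖)^2 * Real.exp ((‖b‖)^2) = 1) :
    (∀ f : ℂ → ℂ, MemFock f → MemFock (Cabc a b c f)) ∧
    (∀ f g : ℂ → ℂ, ∀ z : ℂ, Cabc a b c (f + g) z = Cabc a b c f z + Cabc a b c g z) ∧
    (∀ (t : ℂ) (f : ℂ → ℂ) (z : ℂ),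
      Cabc a b c (fun w => t * f w) z = star t * Cabc a b c f z) ∧
    (∀ f : ℂ → ℂ, ∀ z : ℂ, Cabc a b c (Cabc a b c f) z = f z) ∧
    (∀ f g : ℂ → ℂ, MemFock f → MemFock g →
      fockInner (Cabc a b c f) (Cabc a b c g) = fockInner g f) := by
  -- basic algebraic consequences of the hypotheses
  have hab : a * star b = -b := by
    have := congrArg (star : ℂ → ℂ) hb
    simp only [star_add, star_mul', star_star, star_zero] at this
    linear_combination this
  have haa : a * star a = 1 := by
    have : a * (starRingEnd ℂ) a = ((Complex.normSq a : ℝ) : ℂ) := Complex.mul_conj a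
    rw [show (star a : ℂ) = (starRingEnd ℂ) a from rfl, this,
      Complex.normSq_eq_norm_sq, ha]
    norm_num
  -- the affine anti-holomorphic change of variables
  set T : ℂ → ℂ := fun z => star (a * z + b) with hT_def
  -- the key weight identity
  have wkey : ∀ z : ℂ, (‖c‖)^2 * Real.exp (2*(b*z).re) * fockWeight z
      = fockWeight (T z) := by
    have hcsq : (‖c‖)^2 = Real.exp (-(‖b‖)^2) := by
      have h := Real.exp_ne_zero ((‖b‖)^2)
      field_simp [Real.exp_neg]
      rw [Real.exp_neg]; exact eq_inv_of_mul_eq_one_left hc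
    intro z
    have h1 : ‖star (a*z+b)‖ = ‖a*z+b‖ := by
      rw [RCLike.star_def, Complex.norm_conj]
    have h2 : (‖a*z+b‖)^2
        = (‖z‖)^2 + (‖b‖)^2 - 2*(b*z).re := by
      rw [Complex.sq_norm, Complex.normSq_add, Complex.sq_norm, Complex.sq_norm]
      have h3 : a * z * (starRingEnd ℂ) b = -(b*z) := by
        rw [mul_comm a z, mul_assoc, show (starRingEnd ℂ) b = star b from rfl, hab]; ring
      rw [Complex.normSq_mul]
      have hna : Complex.normSq a = 1 := by
        rw [← Complex.sq_norm, ha]; norm_num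
      rw [hna, h3]
      simp; ring
    show _ = fockWeight (star (a*z+b))
    unfold fockWeight
    rw [h1, h2, hcsq, ← Real.exp_add, ← Real.exp_add]
    ring_nf
  -- pointwise identity for the norm integrand
  have normkey : ∀ (f : ℂ → ℂ) (z : ℂ),
      (‖Cabc a b c f z‖)^2 * fockWeight z
        = (‖f (T z)‖)^2 * fockWeight (T z) := by
    intro f z
    have : ‖Cabc a b c f z‖
        = ‖c‖ * Real.exp ((b*z).re) * ‖f (T z)‖ := by
      unfold Cabc
      rw [norm_mul, norm_mul, Complex.norm_exp, RCLike.star_def, Complex.norm_conj]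
      rfl
    rw [this, ← wkey z]
    have : Real.exp ((b*z).re) ^ 2 = Real.exp (2*(b*z).re) := by
      rw [sq, ← Real.exp_add]; ring_nf
    rw [mul_pow, mul_pow, this]
    ring
  -- pointwise identity for the inner-product integrand
  have innkey : ∀ (f g : ℂ → ℂ) (z : ℂ),
      Cabc a b c f z * star (Cabc a b c g z) * ((fockWeight z : ℝ) : ℂ)
        = g (T z) * star (f (T z)) * ((fockWeight (T z) : ℝ) : ℂ) := by
    intro f g z
    unfold Cabc
    rw [← wkey z]
    have hcc : c * star c = (((‖c‖)^2 : ℝ) : ℂ) := by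
      rw [show (star c : ℂ) = (starRingEnd ℂ) c from rfl, Complex.mul_conj,
        Complex.normSq_eq_norm_sq]
    have hee : Complex.exp (b*z) * star (Complex.exp (b*z))
        = ((Real.exp (2*(b*z).re) : ℝ) : ℂ) := by
      rw [show (star (Complex.exp (b*z)) : ℂ) = (starRingEnd ℂ) (Complex.exp (b*z)) from rfl,
        ← Complex.exp_conj, ← Complex.exp_add, Complex.add_conj, Complex.ofReal_exp]
    show (c * Complex.exp (b*z) * star (f (T z))) * star (c * Complex.exp (b*z) * star (g (T z)))
        * ((fockWeight z : ℝ) : ℂ) = _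
    rw [star_mul', star_mul', star_star]
    calc (c * Complex.exp (b*z) * star (f (T z))) *
          (star c * star (Complex.exp (b*z)) * g (T z)) * ((fockWeight z : ℝ) : ℂ)
        = (c * star c) * (Complex.exp (b*z) * star (Complex.exp (b*z))) *
            (g (T z) * star (f (T z))) * ((fockWeight z : ℝ) : ℂ) := by ring
      _ = g (T z) * star (f (T z)) *
            ((((‖c‖)^2 : ℝ) : ℂ) * ((Real.exp (2*(b*z).re) : ℝ) : ℂ)
              * ((fockWeight z : ℝ) : ℂ)) := by rw [hcc, hee]; ring
      _ = _ := by push_cast; ring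
  -- measure-theoretic facts about T
  set aC : Circle := ⟨a, mem_sphere_zero_iff_norm.mpr (by exact ha)⟩
  have hrot : MeasurePreserving (fun z : ℂ => a * z) volume volume := by
    have := (rotation aC).measurePreserving
    have e : (fun z : ℂ => a * z) = ⇑(rotation aC) := funext fun z => rfl
    rw [e]; exact this
  have hadd : MeasurePreserving (fun z : ℂ => z + b) volume volume :=
    measurePreserving_add_right volume b
  have hconj : MeasurePreserving (fun z : ℂ => star z) volume volume := by
    have := Complex.conjLIE.measurePreserving
    have e : (fun z : ℂ => star z) = ⇑Complex.conjLIE := funext fun z => rfl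
    rw [e]; exact this
  have hT : MeasurePreserving T volume volume := by
    have := (hconj.comp (hadd.comp hrot))
    convert this using 1
    rfl
  have hTemb : MeasurableEmbedding T := by
    have e1 : MeasurableEmbedding (fun z : ℂ => a * z) :=
      (rotation aC).toHomeomorph.measurableEmbedding
    have e2 : MeasurableEmbedding (fun z : ℂ => z + b) :=
      (Homeomorph.addRight b).measurableEmbedding
    have e3 : MeasurableEmbedding (fun z : ℂ => star z) :=
      Complex.conjLIE.toHomeomorph.measurableEmbedding
    have := e3.comp (e2.comp e1)
    convert this using 1
    rfl
  refine ⟨?_, ?_, ?_, ?_, ?_⟩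
  · -- maps F² into F²
    rintro f ⟨hfd, hfi⟩
    constructor
    · have hG : Differentiable ℂ (fun z => (starRingEnd ℂ) (f ((starRingEnd ℂ) z))) :=
        diff_conj_conj' hfd
      have : Differentiable ℂ (fun z : ℂ => c * Complex.exp (b * z) *
          (fun w => (starRingEnd ℂ) (f ((starRingEnd ℂ) w))) (a * z + b)) := by
        exact ((differentiable_const c).mul (Complex.differentiable_exp.comp
          ((differentiable_const b).mul differentiable_id))).mul
          (hG.comp (((differentiable_const a).mul differentiable_id).add
            (differentiable_const b)))
      exact this
    · have h1 : Integrable ((fun z : ℂ => (‖f z‖)^2 * fockWeight z) ∘ T) :=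
        (hT.integrable_comp_emb hTemb).mpr hfi
      exact h1.congr (Filter.Eventually.of_forall fun z => (normkey f z).symm)
  · -- additivity
    intro f g z
    unfold Cabc
    simp only [Pi.add_apply, star_add]
    ring
  · -- conjugate homogeneity
    intro t f z
    unfold Cabc
    rw [star_mul']
    ring
  · -- involution
    intro f z
    unfold Cabc
    have harg : a * star (a * z + b) + b = star z := by
      simp only [star_add, star_mul']
      linear_combination (star z : ℂ) * haa + hab
    rw [harg, star_star]
    rw [star_mul', star_mul', star_star]
    have hexp : star (b * star (a * z + b)) = -(b*z) + ((‖b‖)^2 : ℝ) := by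
      rw [star_mul', star_star]
      have h1 : star b * a = -b := by linear_combination hab
      have h2 : star b * b = (((‖b‖)^2 : ℝ) : ℂ) := by
        rw [mul_comm, show (star b : ℂ) = (starRingEnd ℂ) b from rfl, Complex.mul_conj,
          Complex.normSq_eq_norm_sq]
      calc star b * (a * z + b) = (star b * a) * z + star b * b := by ring
        _ = -(b*z) + ((‖b‖)^2 : ℝ) := by rw [h1, h2]; ring
    rw [show (star (Complex.exp (b * star (a*z+b))) : ℂ)
        = Complex.exp (star (b * star (a*z+b))) from (Complex.exp_conj _).symm, hexp]
    have hcc : c * star c = (((‖c‖)^2 : ℝ) : ℂ) := by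
      rw [show (star c : ℂ) = (starRingEnd ℂ) c from rfl, Complex.mul_conj,
        Complex.normSq_eq_norm_sq]
    calc c * Complex.exp (b*z) * (star c * Complex.exp (-(b*z) + ((‖b‖)^2 : ℝ)) * f z)
        = (c * star c) * (Complex.exp (b*z) * Complex.exp (-(b*z) + ((‖b‖)^2 : ℝ))) * f z := by
          ring
      _ = (((‖c‖)^2 : ℝ) : ℂ) * Complex.exp (((‖b‖)^2 : ℝ)) * f z := by
          rw [hcc, ← Complex.exp_add]; ring_nf
      _ = f z := by
          rw [← Complex.ofReal_exp, ← Complex.ofReal_mul, hc]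
          norm_num
  · -- isometry / adjoint property
    intro f g _ _
    unfold fockInner
    congr 1
    have heq : (fun z : ℂ => Cabc a b c f z * star (Cabc a b c g z) * ((fockWeight z : ℝ) : ℂ))
        = fun z : ℂ => (fun w : ℂ => g w * star (f w) * ((fockWeight w : ℝ) : ℂ)) (T z) :=
      funext (innkey f g)
    rw [heq]
    exact hT.integral_comp hTemb (fun w : ℂ => g w * star (f w) * ((fockWeight w : ℝ) : ℂ))
end

section
/- Let m ≥ 1, a, b, A, B, C, D complex constants with A ≠ 0, C ≠ 0, and set φ(z) = Az + B, ψ(z) = C e^{Dz}, Φ(z) = (aAz + aB + b)^m with a ≠ 0. Let S_max be the maximal operator on F² given by ψ(z)f(φ(z)) = Φ(z)g^{(m)}(z). Then every f ∈ dom(S_max) has a zero at −b/a of order at least m. -/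
open MeasureTheory Complex Filter

-- aux lemma 1: vanishing
lemma aux_factor (m : ℕ) (z₀ : ℂ) (k : ℂ → ℂ) (hk : ContDiff ℂ (⊤ : ℕ∞) k) :
    ∀ j ≤ m, ∃ u : ℂ → ℂ, ContDiff ℂ (⊤ : ℕ∞) u ∧
      iteratedDeriv j (fun z => (z - z₀) ^ m * k z) = fun z => (z - z₀) ^ (m - j) * u z := by
  intro j
  induction j with
  | zero => intro _; exact ⟨k, hk, by simp [iteratedDeriv_zero]⟩
  | succ j ih =>
    intro hj
    obtain ⟨u, hu, heq⟩ := ih (Nat.le_of_succ_le hj)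
    have hdu : ContDiff ℂ (⊤ : ℕ∞) (deriv u) := (contDiff_infty_iff_deriv.1 hu).2
    refine ⟨fun z => (m - j : ℕ) * u z + (z - z₀) * deriv u z, ?_, ?_⟩
    · exact (contDiff_const.mul hu).add
        (((contDiff_id.sub contDiff_const)).mul hdu)
    · rw [iteratedDeriv_succ, heq]
      funext z
      have h1 : HasDerivAt (fun z => (z - z₀) ^ (m - j)) ((m - j : ℕ) * (z - z₀) ^ (m - j - 1)) z := by
        simpa using (((hasDerivAt_id z).sub_const z₀).fun_pow (m - j))
      have h2 : HasDerivAt u (deriv u z) z :=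
        (hu.differentiable (by simp) z).hasDerivAt
      have := (h1.fun_mul h2).deriv
      rw [this]
      have hmj : m - j = (m - (j + 1)) + 1 := by omega
      rw [hmj, Nat.add_sub_cancel]
      ring

lemma aux_comp (f : ℂ → ℂ) (hf : ContDiff ℂ (⊤ : ℕ∞) f) (A B : ℂ) :
    ∀ j : ℕ, ∀ z : ℂ,
      iteratedDeriv j (fun z => f (A * z + B)) z = A ^ j * iteratedDeriv j f (A * z + B) := by
  intro j
  induction j with
  | zero => intro z; simp [iteratedDeriv_zero]
  | succ j ih =>
    intro z
    have hdiff : Differentiable ℂ (iteratedDeriv j f) :=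
      hf.differentiable_iteratedDeriv j
        (by exact_mod_cast WithTop.coe_lt_coe.mpr (WithTop.coe_lt_top j))
    have hfun : iteratedDeriv j (fun z => f (A * z + B)) =
        fun z => A ^ j * iteratedDeriv j f (A * z + B) := funext ih
    have h1 : HasDerivAt (fun z : ℂ => A * z + B) A z := by
      simpa using ((hasDerivAt_id z).const_mul A).add_const B
    have h2 : HasDerivAt (iteratedDeriv j f) (iteratedDeriv (j + 1) f (A * z + B)) (A * z + B) := by
      rw [iteratedDeriv_succ]
      exact (hdiff (A * z + B)).hasDerivAt
    have h3 : HasDerivAt (fun z => iteratedDeriv j f (A * z + B))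
        (iteratedDeriv (j + 1) f (A * z + B) * A) z := by have h := h2.comp z h1; exact h
    rw [iteratedDeriv_succ, hfun, (h3.const_mul (A ^ j)).deriv]
    ring

/-- Every `f` in the domain of `S_max` (with the explicit symbols) vanishes at `-b/a`
to order at least `m`. -/
theorem stmt10 (m : ℕ) (hm : 1 ≤ m) (a b A B C D : ℂ)
    (hA : A ≠ 0) (hC : C ≠ 0) (ha : a ≠ 0)
    (f : ℂ → ℂ) (hf : MemFock f)
    (hdom : ∃ g : ℂ → ℂ, MemFock g ∧
      ∀ z : ℂ, C * Complex.exp (D * z) * f (A * z + B) =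
        (a * A * z + a * B + b) ^ m * iteratedDeriv m g z) :
    ∀ j < m, iteratedDeriv j f (-b / a) = 0 := by
  obtain ⟨g, hg, heq⟩ := hdom
  set z₀ : ℂ := (-b / a - B) / A with hz₀def
  have hz0 : A * z₀ + B = -b / a := by
    rw [hz₀def]; field_simp; ring
  have hΦ : ∀ z : ℂ, a * A * z + a * B + b = a * A * (z - z₀) := by
    intro z
    rw [hz₀def]; field_simp; ring
  set k : ℂ → ℂ := fun z => C⁻¹ * Complex.exp (-(D * z)) * ((a * A) ^ m * iteratedDeriv m g z)
    with hkdef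
  have hgm : Differentiable ℂ (iteratedDeriv m g) :=
    (hg.1.contDiff : ContDiff ℂ (⊤ : ℕ∞) g).differentiable_iteratedDeriv m
      (by exact_mod_cast WithTop.coe_lt_coe.mpr (WithTop.coe_lt_top m))
  have hkc : ContDiff ℂ (⊤ : ℕ∞) k := by
    have : Differentiable ℂ k := by
      apply Differentiable.mul
      · exact (differentiable_const _).mul
          (((differentiable_const D).mul differentiable_id).neg.cexp)
      · exact (differentiable_const _).mul hgm
    exact this.contDiff
  have hh : ∀ z : ℂ, f (A * z + B) = (z - z₀) ^ m * k z := by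
    intro z
    have h1 := heq z
    rw [hΦ z] at h1
    have hexp : Complex.exp (D * z) ≠ 0 := Complex.exp_ne_zero _
    have hCe : C * Complex.exp (D * z) ≠ 0 := mul_ne_zero hC hexp
    have hk : k z = (C * Complex.exp (D * z))⁻¹ * ((a * A) ^ m * iteratedDeriv m g z) := by
      simp only [hkdef]
      rw [Complex.exp_neg, mul_inv]
    rw [hk]
    have h2 : C * Complex.exp (D * z) * f (A * z + B)
        = C * Complex.exp (D * z) *
          ((z - z₀) ^ m * ((C * Complex.exp (D * z))⁻¹ * ((a * A) ^ m * iteratedDeriv m g z))) := by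
      rw [h1, mul_pow]
      field_simp
    exact mul_left_cancel₀ hCe h2
  intro j hj
  obtain ⟨u, hu, hequ⟩ := aux_factor m z₀ k hkc j hj.le
  have hcomp := aux_comp f hf.1.contDiff A B j z₀
  have hfeq : (fun z => f (A * z + B)) = fun z => (z - z₀) ^ m * k z := funext hh
  have h0 : iteratedDeriv j (fun z => (z - z₀) ^ m * k z) z₀ = 0 := by
    rw [hequ]
    simp [sub_self, zero_pow, Nat.sub_ne_zero_of_lt hj]
  rw [hfeq, h0, hz0] at hcomp
  exact ((mul_eq_zero.mp hcomp.symm).resolve_left (pow_ne_zero j hA))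
end

section
/- Let m ≥ 1, a ≠ 0, b ∈ ℂ, and A, B, C, D as above with A, C ≠ 0, φ(z) = Az+B, ψ(z) = Ce^{Dz}, Φ(z) = (aAz+aB+b)^m. For integers k with 0 ≤ k < m, the function K_{z,a,b}^{[k]}(x) = (ax+b)^k e^{x·conj(z)} does NOT belong to dom(S_max), while for k ≥ m it does belong to dom(S_max). -/
open MeasureTheory Complex Filter

/-- The kernel-type function `K_{z,a,b}^{[k]}(x) = (ax+b)^k e^{x conj z}`. -/
noncomputable def Kker (a b z : ℂ) (k : ℕ) : ℂ → ℂ :=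
  fun x => (a * x + b) ^ k * Complex.exp (x * star z)

/-- membership in `dom(S_max)` for the explicit symbols. -/
def domS (m : ℕ) (a b A B C D : ℂ) (f : ℂ → ℂ) : Prop :=
  MemFock f ∧ ∃ g : ℂ → ℂ, MemFock g ∧
    ∀ z : ℂ, C * Complex.exp (D * z) * f (A * z + B) =
      (a * A * z + a * B + b) ^ m * iteratedDeriv m g z

open Polynomial in
lemma exists_poly_antideriv (α : ℂ) (Q : ℂ[X]) :
    ∃ R : ℂ[X], derivative R + Polynomial.C α * R = Q := by
  rcases eq_or_ne α 0 with h | h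
  · subst h
    simp only [map_zero, zero_mul, add_zero]
    induction Q using Polynomial.induction_on' with
    | add p q hp hq =>
      obtain ⟨R1, h1⟩ := hp; obtain ⟨R2, h2⟩ := hq
      exact ⟨R1 + R2, by simp [h1, h2]⟩
    | monomial n c =>
      refine ⟨monomial (n+1) (c / (n+1)), ?_⟩
      rw [derivative_monomial]
      have : ((n:ℂ)+1) ≠ 0 := Nat.cast_add_one_ne_zero n
      simp only [Nat.add_sub_cancel, Nat.cast_add, Nat.cast_one]
      rw [div_mul_cancel₀ _ this]
  · suffices H : ∀ n (Q : ℂ[X]), Q.natDegree ≤ n →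
        ∃ R : ℂ[X], derivative R + Polynomial.C α * R = Q from H Q.natDegree Q le_rfl
    intro n
    induction n with
    | zero =>
      intro Q hQ
      refine ⟨Polynomial.C (α⁻¹ * Q.coeff 0), ?_⟩
      conv_rhs => rw [Polynomial.eq_C_of_natDegree_le_zero hQ]
      rw [derivative_C, ← map_mul, ← mul_assoc, mul_inv_cancel₀ h, one_mul, zero_add]
    | succ n ih =>
      intro Q hQ
      obtain ⟨R, hR⟩ := ih (Polynomial.C α⁻¹ * derivative Q)
        (le_trans (natDegree_C_mul_le _ _)
          (le_trans (natDegree_derivative_le Q) (by omega)))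
      refine ⟨Polynomial.C α⁻¹ * Q - R, ?_⟩
      have : Polynomial.C α * (Polynomial.C α⁻¹ * Q) = Q := by
        rw [← mul_assoc, ← map_mul, mul_inv_cancel₀ h, map_one, one_mul]
      rw [derivative_sub, derivative_C_mul, mul_sub, this]
      linear_combination -hR

open Polynomial in
lemma hasDerivAt_polyexp (α : ℂ) (Q : ℂ[X]) (t : ℂ) :
    HasDerivAt (fun s => Q.eval s * Complex.exp (α * s))
      ((derivative Q + Polynomial.C α * Q).eval t * Complex.exp (α * t)) t := by
  have h1 : HasDerivAt (fun s : ℂ => Q.eval s) (Q.derivative.eval t) t := Q.hasDerivAt t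
  have h2 : HasDerivAt (fun s : ℂ => Complex.exp (α * s))
      (Complex.exp (α * t) * α) t :=
    (Complex.hasDerivAt_exp (α * t)).comp t ((hasDerivAt_id t).const_mul α) |>.congr_deriv
      (by ring)
  have : HasDerivAt (fun s => Q.eval s * Complex.exp (α * s)) _ t := h1.mul h2
  convert this using 1
  simp [eval_add, eval_mul]
  ring

open Polynomial in
lemma exists_antideriv_polyexp (α : ℂ) (Q : ℂ[X]) :
    ∃ R : ℂ[X], (fun s => Q.eval s * Complex.exp (α * s)) =
      deriv (fun s => R.eval s * Complex.exp (α * s)) := by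
  obtain ⟨R, hR⟩ := exists_poly_antideriv α Q
  refine ⟨R, funext fun t => ?_⟩
  rw [(hasDerivAt_polyexp α R t).deriv, hR]

open Polynomial in
lemma exists_iteratedDeriv_polyexp (α : ℂ) (m : ℕ) (Q : ℂ[X]) :
    ∃ R : ℂ[X], ∀ t, iteratedDeriv m (fun s => R.eval s * Complex.exp (α * s)) t
      = Q.eval t * Complex.exp (α * t) := by
  induction m with
  | zero => exact ⟨Q, fun t => by simp [iteratedDeriv_zero]⟩
  | succ n ih =>
    obtain ⟨R, hR⟩ := ih
    obtain ⟨S, hS⟩ := exists_antideriv_polyexp α R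
    refine ⟨S, fun t => ?_⟩
    rw [iteratedDeriv_succ', ← hS, hR]

lemma integrable_gauss_half : Integrable (fun t : ℂ => Real.exp (-(1/2) * ‖t‖^2)) := by
  have h := GaussianFourier.integrable_cexp_neg_mul_sq_norm_add (V := ℂ)
      (b := (1/2 : ℂ)) (by norm_num) 0 0
  have h2 := h.norm
  apply h2.congr
  filter_upwards with t
  rw [zero_mul, add_zero, Complex.norm_exp]
  have : ((-(1/2) * (‖t‖:ℂ)^2)) = ((-(1/2) * ‖t‖^2 : ℝ) : ℂ) := by push_cast; ring
  rw [this, Complex.ofReal_re]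

open Polynomial in
lemma memFock_polyexp (α : ℂ) (Q : ℂ[X]) :
    MemFock (fun t => Q.eval t * Complex.exp (α * t)) := by
  constructor
  · exact (Q.differentiable).mul (Complex.differentiable_exp.comp
      ((differentiable_id.const_mul α)))
  · set N := Q.natDegree with hN
    set M : ℝ := ∑ i ∈ Finset.range (N+1), ‖Q.coeff i‖ with hM
    have hM0 : 0 ≤ M := Finset.sum_nonneg fun i _ => norm_nonneg _
    have hQbound : ∀ t : ℂ, ‖Q.eval t‖ ≤ M * Real.exp (N * ‖t‖) := by
      intro t
      rw [Polynomial.eval_eq_sum_range]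
      calc ‖∑ i ∈ Finset.range (N+1), Q.coeff i * t^i‖
          ≤ ∑ i ∈ Finset.range (N+1), ‖Q.coeff i * t^i‖ := by
            exact norm_sum_le _ _
        _ ≤ ∑ i ∈ Finset.range (N+1), ‖Q.coeff i‖ * Real.exp (N * ‖t‖) := by
            apply Finset.sum_le_sum
            intro i hi
            rw [norm_mul, norm_pow]
            apply mul_le_mul_of_nonneg_left _ (norm_nonneg _)
            have h1 : ‖t‖ ≤ Real.exp ‖t‖ := by
              calc ‖t‖ ≤ ‖t‖ + 1 := by linarith
                _ ≤ Real.exp (‖t‖) := Real.add_one_le_exp _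
            calc ‖t‖ ^ i ≤ Real.exp ‖t‖ ^ i :=
                  pow_le_pow_left₀ (norm_nonneg _) h1 i
              _ = Real.exp (i * ‖t‖) := by rw [← Real.exp_nat_mul]
              _ ≤ Real.exp (N * ‖t‖) := by
                  apply Real.exp_le_exp.2
                  have : (i : ℝ) ≤ N := by
                    exact_mod_cast Nat.le_of_lt_succ (Finset.mem_range.1 hi)
                  exact mul_le_mul_of_nonneg_right this (norm_nonneg t)
        _ = M * Real.exp (N * ‖t‖) := by rw [← Finset.sum_mul]
    set S : ℝ := 2*N + 2*‖α‖ with hS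
    set K : ℝ := M^2 * Real.exp (S^2/2) with hK
    apply Integrable.mono' (g := fun t : ℂ => K * Real.exp (-(1/2) * ‖t‖^2))
      (integrable_gauss_half.const_mul K)
    · apply Continuous.aestronglyMeasurable
      apply Continuous.mul
      · exact (continuous_norm.comp (Q.continuous.mul
          (Complex.continuous_exp.comp (continuous_const.mul continuous_id)))).pow 2
      · exact Real.continuous_exp.comp ((continuous_norm.pow 2).neg)
    · filter_upwards with t
      rw [Real.norm_eq_abs, _root_.abs_of_nonneg (mul_nonneg (by positivity)
        (show (0:ℝ) ≤ fockWeight t from Real.exp_nonneg _))]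
      have habs : ‖Q.eval t * Complex.exp (α * t)‖
          ≤ M * Real.exp (N * ‖t‖) * Real.exp (‖α‖ * ‖t‖) := by
        rw [norm_mul, Complex.norm_exp]
        apply mul_le_mul (hQbound t) _ (Real.exp_nonneg _) (by positivity)
        apply Real.exp_le_exp.2
        calc (α * t).re ≤ ‖α * t‖ := Complex.re_le_norm _
          _ = ‖α‖ * ‖t‖ := by rw [norm_mul]
      have h1 : (‖Q.eval t * Complex.exp (α * t)‖)^2 * fockWeight t
          ≤ (M * Real.exp (N * ‖t‖) * Real.exp (‖α‖ * ‖t‖))^2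
            * Real.exp (-‖t‖^2) := by
        have hw : fockWeight t = Real.exp (-‖t‖^2) := by
          rw [fockWeight]
        rw [hw]
        apply mul_le_mul _ le_rfl (Real.exp_nonneg _) (by positivity)
        · exact pow_le_pow_left₀ (norm_nonneg _) habs 2
      apply h1.trans
      rw [mul_pow, mul_pow, ← Real.exp_nat_mul, ← Real.exp_nat_mul, mul_assoc, mul_assoc,
        ← Real.exp_add, ← Real.exp_add]
      have harg : (((2:ℕ):ℝ) * ((N:ℝ) * ‖t‖) + (((2:ℕ):ℝ) * (‖α‖ * ‖t‖) + -‖t‖^2))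
          = S * ‖t‖ - ‖t‖^2 := by rw [hS]; push_cast; ring
      rw [harg, hK, mul_assoc, ← Real.exp_add]
      apply mul_le_mul_of_nonneg_left _ (by positivity)
      apply Real.exp_le_exp.2
      have key2 : ∀ x y : ℝ, x*y - y^2 ≤ x^2/2 + -(1/2)*y^2 := by
        intro x y; nlinarith [sq_nonneg (x - y)]
      exact key2 S ‖t‖

/-- `K_{z,a,b}^{[k]} ∉ dom(S_max)` for `k < m`, while `K_{z,a,b}^{[k]} ∈ dom(S_max)` for `k ≥ m`. -/
theorem stmt11 (m : ℕ) (hm : 1 ≤ m) (a b A B C D : ℂ)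
    (hA : A ≠ 0) (hC : C ≠ 0) (ha : a ≠ 0) (z : ℂ) :
    (∀ k : ℕ, k < m → ¬ domS m a b A B C D (Kker a b z k)) ∧
    (∀ k : ℕ, m ≤ k → domS m a b A B C D (Kker a b z k)) := by
  have haA : a * A ≠ 0 := mul_ne_zero ha hA
  have hKf : ∀ k : ℕ, MemFock (Kker a b z k) := by
    intro k
    have : Kker a b z k = fun x =>
        ((Polynomial.C a * Polynomial.X + Polynomial.C b)^k).eval x
          * Complex.exp (star z * x) := by
      funext x
      simp only [Kker, Polynomial.eval_pow, Polynomial.eval_add, Polynomial.eval_mul,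
        Polynomial.eval_C, Polynomial.eval_X]
      rw [mul_comm x (star z)]
    rw [this]
    exact memFock_polyexp _ _
  constructor
  · -- k < m : not in domain
    intro k hkm hdom
    obtain ⟨hK, g, hg, heq⟩ := hdom
    set t₀ : ℂ := -(a*B+b)/(a*A) with ht₀
    set w : ℂ → ℂ := fun t => a*A*t + a*B + b with hw
    have hw0 : w t₀ = 0 := by
      rw [hw, ht₀]
      field_simp
      ring
    have hwne : ∀ t : ℂ, t ≠ t₀ → w t ≠ 0 := by
      intro t ht h0
      apply ht
      rw [ht₀]
      rw [hw] at h0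
      field_simp
      linear_combination h0
    set u : ℂ → ℂ := fun t => C * Complex.exp (D*t) * Complex.exp ((A*t+B) * star z)
      with hu
    have hucont : Continuous u := by
      rw [hu]; fun_prop
    have hGcont : Continuous (iteratedDeriv m g) :=
      (hg.1.contDiff (n := (⊤ : WithTop ℕ∞))).continuous_iteratedDeriv m le_top
    have hF2cont : Continuous (fun t => (w t)^(m-k) * iteratedDeriv m g t) := by
      apply Continuous.mul _ hGcont
      rw [hw]; fun_prop
    have heq2 : Set.EqOn u (fun t => (w t)^(m-k) * iteratedDeriv m g t) {t₀}ᶜ := by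
      intro t ht
      have h1 := heq t
      have h2 : C * Complex.exp (D * t) * Kker a b z k (A * t + B)
          = (w t)^k * u t := by
        rw [Kker, hw, hu]
        have : a * (A*t+B) + b = a*A*t + a*B + b := by ring
        rw [this]
        ring
      rw [h2] at h1
      have h3 : (a * A * t + a * B + b) ^ m = (w t)^k * (w t)^(m-k) := by
        rw [hw, ← pow_add, Nat.add_sub_cancel' (le_of_lt hkm)]
      rw [h3, mul_assoc] at h1
      exact mul_left_cancel₀ (pow_ne_zero k (hwne t ht)) h1
    have hfin : u = fun t => (w t)^(m-k) * iteratedDeriv m g t :=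
      Continuous.ext_on (dense_compl_singleton t₀) hucont hF2cont heq2
    have := congrFun hfin t₀
    rw [hw0, zero_pow (by omega), zero_mul] at this
    exact (mul_ne_zero (mul_ne_zero hC (Complex.exp_ne_zero _))
      (Complex.exp_ne_zero _)) this
  · -- m ≤ k : in domain
    intro k hkm
    refine ⟨hKf k, ?_⟩
    set α : ℂ := D + A * star z with hα
    set j : ℕ := k - m with hj
    set c₀ : ℂ := C * Complex.exp (B * star z) with hc₀
    set Q₀ : Polynomial ℂ := Polynomial.C c₀ *
      (Polynomial.C (a*A) * Polynomial.X + Polynomial.C (a*B+b))^j with hQ₀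
    obtain ⟨R, hR⟩ := exists_iteratedDeriv_polyexp α m Q₀
    refine ⟨fun s => R.eval s * Complex.exp (α * s), memFock_polyexp α R, ?_⟩
    intro t
    rw [hR t]
    have hQev : Q₀.eval t = c₀ * (a*A*t + (a*B+b))^j := by
      simp [hQ₀]
    rw [hQev, Kker]
    have hk : k = m + j := by omega
    rw [hk, hc₀, hα]
    have h1 : a * (A*t+B) + b = a*A*t + (a*B+b) := by ring
    have h2 : a*A*t + a*B + b = a*A*t + (a*B+b) := by ring
    rw [h1, h2, pow_add]
    have hexp : Complex.exp (D*t) * Complex.exp ((A*t+B) * star z)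
        = Complex.exp (B * star z) * Complex.exp ((D + A * star z) * t) := by
      rw [← Complex.exp_add, ← Complex.exp_add]
      congr 1
      ring
    linear_combination (C * (a*A*t + (a*B+b))^m * (a*A*t+(a*B+b))^j) * hexp
end

section
/- Let φ be a nonconstant entire function, ψ entire with no zeros, Φ entire not identically zero, and m ≥ 0. Suppose ψ(u)φ(u)^m conj(Φ(z)) e^{φ(u)·conj(z)} = Φ(u) conj(ψ(z)φ(z)^m) e^{u·conj(φ(z))} for all u, z ∈ ℂ. Then φ(u) = Au + B with A real, and there is a nonzero real constant C such that C e^{u·conj(B)} Φ(u) = ψ(u)(Au+B)^m for all u. -/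
open Complex

private lemma star_cexp' (w : ℂ) : star (Complex.exp w) = Complex.exp (star w) := by
  rw [Complex.star_def]
  exact (Complex.exp_conj w).symm

private lemma dense_ne_zero' (f : ℂ → ℂ) (hf : Differentiable ℂ f) (h0 : ∃ z, f z ≠ 0) :
    Dense {x : ℂ | f x ≠ 0} := by
  intro x
  rcases (hf.analyticAt x).eventually_eq_zero_or_eventually_ne_zero with h | h
  · exfalso
    obtain ⟨z, hz⟩ := h0
    have hall : Set.EqOn f 0 Set.univ :=
      AnalyticOnNhd.eqOn_zero_of_preconnected_of_eventuallyEq_zero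
        (fun w _ => hf.analyticAt w) isPreconnected_univ (Set.mem_univ x) h
    exact hz (hall (Set.mem_univ z))
  · exact mem_closure_iff_frequently.mpr (h.frequently.filter_mono nhdsWithin_le_nhds)

/-- If the symbols satisfy the hermitian functional equation, then `φ(u) = Au + B` with `A`
real and `C e^{u conj(B)} Φ(u) = ψ(u)(Au+B)^m` for a nonzero real constant `C`. -/
theorem stmt15 (m : ℕ) (ψ φ Φ : ℂ → ℂ)
    (hψ : Differentiable ℂ ψ) (hφ : Differentiable ℂ φ) (hΦ : Differentiable ℂ Φ)
    (hψ0 : ∀ z, ψ z ≠ 0) (hΦ0 : ∃ z, Φ z ≠ 0) (hφc : ∃ z w, φ z ≠ φ w)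
    (heq : ∀ u z : ℂ,
      ψ u * (φ u) ^ m * star (Φ z) * Complex.exp (φ u * star z) =
      Φ u * star (ψ z * (φ z) ^ m) * Complex.exp (u * star (φ z))) :
    ∃ (A : ℝ) (B : ℂ) (C : ℝ), C ≠ 0 ∧ (∀ u, φ u = (A : ℂ) * u + B) ∧
      ∀ u : ℂ, (C : ℂ) * Complex.exp (u * star B) * Φ u =
        ψ u * ((A : ℂ) * u + B) ^ m := by
  obtain ⟨z₀, hz₀⟩ := hΦ0
  have hsz : star (Φ z₀) ≠ 0 := star_ne_zero.mpr hz₀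
  set a : ℂ := star (φ z₀) with ha
  set b : ℂ := star z₀ with hb
  set c : ℂ := star (ψ z₀ * φ z₀ ^ m) / star (Φ z₀) with hc
  have hcs : c * star (Φ z₀) = star (ψ z₀ * φ z₀ ^ m) := div_mul_cancel₀ _ hsz
  -- Representation of ψ φ^m in terms of Φ
  have hrep : ∀ u, ψ u * φ u ^ m = c * Φ u * Complex.exp (u * a - φ u * b) := by
    intro u
    have he : Complex.exp (φ u * b) ≠ 0 := Complex.exp_ne_zero _
    apply mul_right_cancel₀ (mul_ne_zero hsz he)
    calc ψ u * φ u ^ m * (star (Φ z₀) * Complex.exp (φ u * b))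
        = ψ u * φ u ^ m * star (Φ z₀) * Complex.exp (φ u * star z₀) := by rw [← hb]; ring
      _ = Φ u * star (ψ z₀ * φ z₀ ^ m) * Complex.exp (u * star (φ z₀)) := heq u z₀
      _ = Φ u * (c * star (Φ z₀)) * Complex.exp (u * a) := by rw [hcs, ← ha]
      _ = c * Φ u * Complex.exp (u * a - φ u * b) * (star (Φ z₀) * Complex.exp (φ u * b)) := by
          rw [show c * Φ u * Complex.exp (u * a - φ u * b) *
                (star (Φ z₀) * Complex.exp (φ u * b)) =
              Φ u * (c * star (Φ z₀)) *
                (Complex.exp (u * a - φ u * b) * Complex.exp (φ u * b)) from by ring,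
            ← Complex.exp_add]
          ring_nf
  have hcne : c ≠ 0 := by
    intro h0
    obtain ⟨zz, ww, hzw⟩ := hφc
    have hz : ∀ u, φ u = 0 := by
      intro u
      have h := hrep u
      rw [h0, zero_mul, zero_mul] at h
      rcases mul_eq_zero.mp h with h' | h'
      · exact absurd h' (hψ0 u)
      · exact (pow_eq_zero_iff'.mp h').1
    exact hzw (by rw [hz zz, hz ww])
  set X : ℂ → ℂ → ℂ := fun u z => u * a - φ u * b + φ u * star z with hX
  set Y : ℂ → ℂ → ℂ := fun u z =>
    star z * star a - star (φ z) * star b + u * star (φ z) with hY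
  have hdense : Dense {x : ℂ | Φ x ≠ 0} := dense_ne_zero' Φ hΦ ⟨z₀, hz₀⟩
  have hP : ∀ u z, Φ u * star (Φ z) * (c * Complex.exp (X u z)) =
      Φ u * star (Φ z) * (star c * Complex.exp (Y u z)) := by
    intro u z
    have h := heq u z
    rw [hrep u, hrep z] at h
    calc Φ u * star (Φ z) * (c * Complex.exp (X u z))
        = c * Φ u * Complex.exp (u * a - φ u * b) * star (Φ z) *
            Complex.exp (φ u * star z) := by
          simp only [hX, Complex.exp_add]; ring
      _ = Φ u * star (c * Φ z * Complex.exp (z * a - φ z * b)) *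
            Complex.exp (u * star (φ z)) := h
      _ = Φ u * star (Φ z) * (star c * Complex.exp (Y u z)) := by
          simp only [hY, Complex.exp_add, star_mul', star_sub, star_cexp']
          ring
  have hQ : ∀ z, Φ z ≠ 0 → ∀ u,
      c * Complex.exp (X u z) = star c * Complex.exp (Y u z) := by
    intro z hz
    have hc1 : Continuous fun u => c * Complex.exp (X u z) := by
      apply continuous_const.mul
      apply Continuous.cexp
      exact ((continuous_id.mul continuous_const).sub
        (hφ.continuous.mul continuous_const)).add (hφ.continuous.mul continuous_const)
    have hc2 : Continuous fun u => star c * Complex.exp (Y u z) := by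
      apply continuous_const.mul
      apply Continuous.cexp
      exact continuous_const.add (continuous_id.mul continuous_const)
    have hext : (fun u => c * Complex.exp (X u z)) =
        fun u => star c * Complex.exp (Y u z) := by
      apply Continuous.ext_on hdense hc1 hc2
      intro u hu
      exact mul_left_cancel₀ (mul_ne_zero hu (star_ne_zero.mpr hz)) (hP u z)
    exact fun u => congrFun hext u
  have hH : ∀ u z, c * Complex.exp (X u z) = star c * Complex.exp (Y u z) := by
    intro u
    have hc1 : Continuous fun z => c * Complex.exp (X u z) := by
      apply continuous_const.mul
      apply Continuous.cexp
      exact (continuous_const.sub continuous_const).add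
        (continuous_const.mul continuous_star)
    have hc2 : Continuous fun z => star c * Complex.exp (Y u z) := by
      apply continuous_const.mul
      apply Continuous.cexp
      exact ((continuous_star.mul continuous_const).sub
        ((continuous_star.comp hφ.continuous).mul continuous_const)).add
        (continuous_const.mul (continuous_star.comp hφ.continuous))
    have hext : (fun z => c * Complex.exp (X u z)) =
        fun z => star c * Complex.exp (Y u z) := by
      apply Continuous.ext_on hdense hc1 hc2
      intro z hz
      exact hQ z hz u
    exact fun z => congrFun hext z
  -- constancy of the exponent difference in u
  have hDconst : ∀ z u, X u z - Y u z = X 0 z - Y 0 z := by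
    intro z
    have hE : ∀ u, Complex.exp (X u z - Y u z) = star c / c := by
      intro u
      rw [Complex.exp_sub, div_eq_div_iff (Complex.exp_ne_zero _) hcne]
      linear_combination hH u z
    have hD : Differentiable ℂ fun u => X u z - Y u z := by
      apply Differentiable.sub
      · exact ((differentiable_id.mul_const a).sub (hφ.mul_const b)).add
          (hφ.mul_const (star z))
      · exact (differentiable_const _).add (differentiable_id.mul_const _)
    have hderiv : ∀ u, deriv (fun u => X u z - Y u z) u = 0 := by
      intro u
      have h1 : HasDerivAt (fun v => Complex.exp (X v z - Y v z))
          (Complex.exp (X u z - Y u z) * deriv (fun v => X v z - Y v z) u) u :=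
        ((hD u).hasDerivAt).cexp
      have h2 : HasDerivAt (fun v => Complex.exp (X v z - Y v z)) 0 u := by
        simp only [hE]
        exact hasDerivAt_const u _
      have h3 := h1.unique h2
      rcases mul_eq_zero.mp h3 with h' | h'
      · exact absurd h' (Complex.exp_ne_zero _)
      · exact h'
    exact fun u => is_const_of_deriv_eq_zero hD hderiv u 0
  have hstar : ∀ u z, u * a + (φ u - φ 0) * (star z - b) = u * star (φ z) := by
    intro u z
    have h := hDconst z u
    simp only [hX, hY] at h
    linear_combination h
  set B : ℂ := φ 0 with hB
  set A0 : ℂ := star (φ (z₀ + 1)) - a with hA0d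
  have haff : ∀ u, φ u = A0 * u + B := by
    intro u
    have h := hstar u (z₀ + 1)
    have hsb : star (z₀ + 1) - b = 1 := by rw [hb]; simp
    rw [hsb, mul_one] at h
    linear_combination h
  have hsφ : ∀ z, star (φ z) = star A0 * star z + star B := by
    intro z; rw [haff z]; simp [star_mul']
  have key : ∀ z : ℂ, a + A0 * (star z - b) = star A0 * star z + star B := by
    intro z
    have h := hstar 1 z
    rw [haff 1, hsφ z] at h
    linear_combination h
  have hA0conj : star A0 = A0 := by
    have h0 := key 0
    have h1 := key 1
    simp only [star_zero, star_one] at h0 h1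
    linear_combination h0 - h1
  set A : ℝ := A0.re with hAdef
  have hA0 : (A : ℂ) = A0 := by
    apply Complex.conj_eq_iff_re.mp
    rw [← Complex.star_def]
    exact hA0conj
  have haval : a = A0 * b + star B := by
    rw [ha, haff z₀, star_add, star_mul', hA0conj, ← hb]
  have hstara : star a = A0 * star b + B := by
    rw [ha, star_star, haff z₀, hb, star_star]
  have e1 : X 0 z₀ = 0 := by
    simp only [hX]; rw [← hb, ← hB]; ring
  have e2 : Y 0 z₀ = B * b - star (B * b) := by
    simp only [hY]
    rw [← hb, ← ha, hstara, haval, star_mul']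
    ring
  have hR : c = star c * Complex.exp (B * b - star (B * b)) := by
    have h := hH 0 z₀
    rw [e1, e2, Complex.exp_zero, mul_one] at h
    exact h
  set Cc : ℂ := c * Complex.exp (-(B * b)) with hCc
  have h2 : Cc = star c * Complex.exp (-(star (B * b))) := by
    calc Cc = star c * Complex.exp (B * b - star (B * b)) * Complex.exp (-(B * b)) := by
          rw [hCc, ← hR]
      _ = star c * Complex.exp (B * b - star (B * b) + -(B * b)) := by
          rw [mul_assoc, ← Complex.exp_add]
      _ = star c * Complex.exp (-(star (B * b))) := by ring_nf
  have hCconj : star Cc = Cc := by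
    calc star Cc = star c * Complex.exp (-(star (B * b))) := by
          rw [hCc, star_mul', star_cexp', star_neg]
      _ = Cc := h2.symm
  have hCcne : Cc ≠ 0 := mul_ne_zero hcne (Complex.exp_ne_zero _)
  set C : ℝ := Cc.re with hCdef
  have hCeq : (C : ℂ) = Cc := by
    apply Complex.conj_eq_iff_re.mp
    rw [← Complex.star_def]
    exact hCconj
  have hCne : C ≠ 0 := by
    intro h
    apply hCcne
    rw [← hCeq, h, Complex.ofReal_zero]
  refine ⟨A, B, C, hCne, fun u => by rw [haff u, hA0], ?_⟩
  intro u
  have h := hrep u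
  rw [haff u] at h
  have hexp : u * a - (A0 * u + B) * b = u * star B + -(B * b) := by
    rw [haval]; ring
  rw [hexp, Complex.exp_add] at h
  rw [hA0, hCeq, hCc]
  linear_combination -h
end
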